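/- Let > be a precedence, f a function symbol, and (≿, ≻) an order pair on terms. Define, for multisets S, T of terms: S ≻^f T iff S↾_{≮f} ≻^mul (T↾_{≮f} ⊎ T↾_V − S↾_V), where S↾_{≮f} is the submultiset of non-variable terms of S whose root is not smaller than f in the precedence and S↾_V is the submultiset of variables of S; similarly S ≿^f T. Then (≿^f, ≻^f) is an order pair. -/

import Mathlib

inductive Term (F V : Type) : Type where
  | var : V → Term F V
  | fn  : F → List (Term F V) → Term F V

/-- `M ≿^mul N`: an enumeration matches an initial part of `N` by `≿` and
dominates every remaining element of `N` by `≻`. -/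
def MulGe {α : Type*} (ge gt : α → α → Prop) (M N : Multiset α) : Prop :=
  ∃ M₁ M₂ N₁ N₂ : Multiset α, M = M₁ + M₂ ∧ N = N₁ + N₂ ∧
    Multiset.Rel ge M₁ N₁ ∧ ∀ y ∈ N₂, ∃ x ∈ M₂, gt x y

/-- `M ≻^mul N`: as `M ≿^mul N` but with a nonempty strictly dominating part. -/
def MulGt {α : Type*} (ge gt : α → α → Prop) (M N : Multiset α) : Prop :=
  ∃ M₁ M₂ N₁ N₂ : Multiset α, M = M₁ + M₂ ∧ N = N₁ + N₂ ∧
    Multiset.Rel ge M₁ N₁ ∧ M₂ ≠ 0 ∧ ∀ y ∈ N₂, ∃ x ∈ M₂, gt x y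

open scoped Classical in
/-- the variables of `M` -/
noncomputable def resV {F V : Type} (M : Multiset (Term F V)) : Multiset (Term F V) :=
  M.filter (fun t => ∃ x, t = Term.var x)

open scoped Classical in
/-- the non-variable terms of `M` whose root is not smaller than `f` -/
noncomputable def resNL {F V : Type} (prec : F → F → Prop) (f : F)
    (M : Multiset (Term F V)) : Multiset (Term F V) :=
  M.filter (fun t => ∃ g ts, t = Term.fn g ts ∧ ¬ prec g f)

open scoped Classical in
noncomputable def GtF {F V : Type} (ge gt : Term F V → Term F V → Prop)
    (prec : F → F → Prop) (f : F) (S T : Multiset (Term F V)) : Prop :=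
  MulGt ge gt (resNL prec f S) (resNL prec f T + resV T - resV S)

open scoped Classical in
noncomputable def GeF {F V : Type} (ge gt : Term F V → Term F V → Prop)
    (prec : F → F → Prop) (f : F) (S T : Multiset (Term F V)) : Prop :=
  MulGe ge gt (resNL prec f S) (resNL prec f T + resV T - resV S)

section Aux

open scoped Classical

variable {α : Type*} {ge gt : α → α → Prop}

lemma aux_rel_comp {r s t : α → α → Prop} (h : ∀ a b c, r a b → s b c → t a c) :
    ∀ {A B C : Multiset α}, Multiset.Rel r A B → Multiset.Rel s B C → Multiset.Rel t A C := by
  intro A B C h1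
  induction h1 generalizing C with
  | zero =>
    intro h2
    rw [Multiset.rel_zero_left.mp h2]
    exact Multiset.Rel.zero
  | @cons a b as bs hab h1 ih =>
    intro h2
    rcases Multiset.rel_cons_left.mp h2 with ⟨c, C', hbc, h2', rfl⟩
    exact Multiset.Rel.cons (h _ _ _ hab hbc) (ih h2')

lemma aux_rel_mem_right {r : α → α → Prop} {A B : Multiset α} (h : Multiset.Rel r A B)
    {y : α} (hy : y ∈ B) : ∃ x ∈ A, r x y := by
  obtain ⟨B', rfl⟩ := Multiset.exists_cons_of_mem hy
  rcases Multiset.rel_cons_right.mp h with ⟨a, as, hab, _, rfl⟩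
  exact ⟨a, Multiset.mem_cons_self _ _, hab⟩

lemma aux_riesz {a b c d : Multiset α} (h : a + b = c + d) :
    ∃ w x y z : Multiset α, a = w + x ∧ b = y + z ∧ c = w + y ∧ d = x + z := by
  refine ⟨a ∩ c, a - c, c - a, b - (c - a), ?_, ?_, ?_, ?_⟩ <;>
  · ext t
    have hc := congrArg (Multiset.count t) h
    simp only [Multiset.count_add, Multiset.count_sub, Multiset.count_inter] at *
    omega

lemma mulGe_refl (hge_refl : Reflexive ge) (M : Multiset α) : MulGe ge gt M M :=
  ⟨M, 0, M, 0, by simp, by simp, Multiset.rel_refl_of_refl_on fun x _ => hge_refl x, by simp⟩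

lemma mulGe_of_le (hge_refl : Reflexive ge) {M N : Multiset α} (h : N ≤ M) :
    MulGe ge gt M N := by
  refine ⟨N, M - N, N, 0, ?_, by simp,
    Multiset.rel_refl_of_refl_on fun x _ => hge_refl x, by simp⟩
  exact (add_tsub_cancel_of_le h).symm

lemma mulGe_add (hge_refl : Reflexive ge) {M N : Multiset α} (h : MulGe ge gt M N)
    (K : Multiset α) : MulGe ge gt (M + K) (N + K) := by
  obtain ⟨M₁, M₂, N₁, N₂, rfl, rfl, hrel, hdom⟩ := h
  exact ⟨M₁ + K, M₂, N₁ + K, N₂, by abel, by abel,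
    hrel.add (Multiset.rel_refl_of_refl_on fun x _ => hge_refl x), hdom⟩

lemma mulGt_add (hge_refl : Reflexive ge) {M N : Multiset α} (h : MulGt ge gt M N)
    (K : Multiset α) : MulGt ge gt (M + K) (N + K) := by
  obtain ⟨M₁, M₂, N₁, N₂, rfl, rfl, hrel, hne, hdom⟩ := h
  exact ⟨M₁ + K, M₂, N₁ + K, N₂, by abel, by abel,
    hrel.add (Multiset.rel_refl_of_refl_on fun x _ => hge_refl x), hne, hdom⟩

lemma mulGe_of_gt {M N : Multiset α} (h : MulGt ge gt M N) : MulGe ge gt M N := by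
  obtain ⟨M₁, M₂, N₁, N₂, h1, h2, h3, _, h5⟩ := h
  exact ⟨M₁, M₂, N₁, N₂, h1, h2, h3, h5⟩

/-- The common core of the composition lemmas: from witnesses for `M ≥ N` and
`N ≥ P` we produce witnesses for `M ≥ P` whose strict part contains the first
strict part, and is nonempty whenever the second strict part is nonempty. -/
lemma mulGe_compose (hge_refl : Reflexive ge) (hge_trans : Transitive ge)
    (hgt_trans : Transitive gt)
    (hcompat : ∀ a b c d, ge a b → gt b c → ge c d → gt a d)
    {M N P M₂ N₂ N₂' P₂ M₁ N₁ N₁' P₁ : Multiset α}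
    (hM : M = M₁ + M₂) (hN : N = N₁ + N₂) (hrel1 : Multiset.Rel ge M₁ N₁)
    (hdom1 : ∀ y ∈ N₂, ∃ x ∈ M₂, gt x y)
    (hN' : N = N₁' + N₂') (hP : P = P₁ + P₂) (hrel2 : Multiset.Rel ge N₁' P₁)
    (hdom2 : ∀ y ∈ P₂, ∃ x ∈ N₂', gt x y) :
    ∃ K₁ K₂ L₁ L₂ : Multiset α, M = K₁ + K₂ ∧ P = L₁ + L₂ ∧
      Multiset.Rel ge K₁ L₁ ∧ (∀ y ∈ L₂, ∃ x ∈ K₂, gt x y) ∧ M₂ ≤ K₂ ∧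
      (N₂' ≠ 0 → K₂ ≠ 0) := by
  obtain ⟨A, B, C, D, hN₁, hN₂, hN₁', hN₂'⟩ := aux_riesz (hN ▸ hN' : N₁ + N₂ = N₁' + N₂')
  rw [hN₁] at hrel1
  rcases Multiset.rel_add_right.mp hrel1 with ⟨MA, MB, hrelA, hrelB, hM₁⟩
  rw [hN₁'] at hrel2
  rcases Multiset.rel_add_left.mp hrel2 with ⟨PA, PC, hrelPA, hrelPC, hP₁⟩
  refine ⟨MA, MB + M₂, PA, PC + P₂, by rw [hM, hM₁]; abel, by rw [hP, hP₁]; abel,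
    aux_rel_comp (r := ge) (s := ge) (t := ge)
      (fun a b c hab hbc => hge_trans hab hbc) hrelA hrelPA, ?_, le_add_self, ?_⟩
  · intro y hy
    rcases Multiset.mem_add.mp hy with hy | hy
    · -- y ∈ PC : matched downwards by some c ∈ C ⊆ N₂, dominated by M₂
      obtain ⟨c, hc, hcy⟩ := aux_rel_mem_right hrelPC hy
      have hcN₂ : c ∈ N₂ := hN₂ ▸ Multiset.mem_add.mpr (Or.inl hc)
      obtain ⟨m, hm, hmc⟩ := hdom1 c hcN₂
      exact ⟨m, Multiset.mem_add.mpr (Or.inr hm), hcompat m m c y (hge_refl m) hmc hcy⟩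
    · -- y ∈ P₂ : dominated by some w ∈ N₂' = B + D
      obtain ⟨w, hw, hwy⟩ := hdom2 y hy
      rcases Multiset.mem_add.mp (hN₂' ▸ hw) with hwB | hwD
      · obtain ⟨m, hm, hmw⟩ := aux_rel_mem_right hrelB hwB
        exact ⟨m, Multiset.mem_add.mpr (Or.inl hm),
          hcompat m w y y hmw hwy (hge_refl y)⟩
      · have hwN₂ : w ∈ N₂ := hN₂ ▸ Multiset.mem_add.mpr (Or.inr hwD)
        obtain ⟨m, hm, hmw⟩ := hdom1 w hwN₂
        exact ⟨m, Multiset.mem_add.mpr (Or.inr hm), hgt_trans hmw hwy⟩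
  · intro hne hK
    have hMB : MB = 0 :=
      Multiset.le_zero.mp (le_of_le_of_eq (Multiset.le_add_right _ _) hK)
    have hM₂0 : M₂ = 0 :=
      Multiset.le_zero.mp (le_of_le_of_eq (Multiset.le_add_left _ _) hK)
    have hB : B = 0 := by
      rw [hMB] at hrelB
      exact Multiset.rel_zero_left.mp hrelB
    have hD : D = 0 := by
      by_contra hD
      obtain ⟨w, hw⟩ := Multiset.exists_mem_of_ne_zero hD
      have hwN₂ : w ∈ N₂ := hN₂ ▸ Multiset.mem_add.mpr (Or.inr hw)
      obtain ⟨m, hm, _⟩ := hdom1 w hwN₂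
      rw [hM₂0] at hm
      simp at hm
    exact hne (by rw [hN₂', hB, hD]; simp)

lemma mulGe_trans (hge_refl : Reflexive ge) (hge_trans : Transitive ge)
    (hgt_trans : Transitive gt)
    (hcompat : ∀ a b c d, ge a b → gt b c → ge c d → gt a d)
    {M N P : Multiset α} (h1 : MulGe ge gt M N) (h2 : MulGe ge gt N P) :
    MulGe ge gt M P := by
  obtain ⟨M₁, M₂, N₁, N₂, hM, hN, hrel1, hdom1⟩ := h1
  obtain ⟨N₁', N₂', P₁, P₂, hN', hP, hrel2, hdom2⟩ := h2
  obtain ⟨K₁, K₂, L₁, L₂, h1, h2, h3, h4, _, _⟩ :=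
    mulGe_compose hge_refl hge_trans hgt_trans hcompat hM hN hrel1 hdom1 hN' hP hrel2 hdom2
  exact ⟨K₁, K₂, L₁, L₂, h1, h2, h3, h4⟩

lemma mulGt_of_ge_gt (hge_refl : Reflexive ge) (hge_trans : Transitive ge)
    (hgt_trans : Transitive gt)
    (hcompat : ∀ a b c d, ge a b → gt b c → ge c d → gt a d)
    {M N P : Multiset α} (h1 : MulGe ge gt M N) (h2 : MulGt ge gt N P) :
    MulGt ge gt M P := by
  obtain ⟨M₁, M₂, N₁, N₂, hM, hN, hrel1, hdom1⟩ := h1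
  obtain ⟨N₁', N₂', P₁, P₂, hN', hP, hrel2, hne, hdom2⟩ := h2
  obtain ⟨K₁, K₂, L₁, L₂, h1, h2, h3, h4, _, h6⟩ :=
    mulGe_compose hge_refl hge_trans hgt_trans hcompat hM hN hrel1 hdom1 hN' hP hrel2 hdom2
  exact ⟨K₁, K₂, L₁, L₂, h1, h2, h3, h6 hne, h4⟩

lemma mulGt_of_gt_ge (hge_refl : Reflexive ge) (hge_trans : Transitive ge)
    (hgt_trans : Transitive gt)
    (hcompat : ∀ a b c d, ge a b → gt b c → ge c d → gt a d)
    {M N P : Multiset α} (h1 : MulGt ge gt M N) (h2 : MulGe ge gt N P) :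
    MulGt ge gt M P := by
  obtain ⟨M₁, M₂, N₁, N₂, hM, hN, hrel1, hne, hdom1⟩ := h1
  obtain ⟨N₁', N₂', P₁, P₂, hN', hP, hrel2, hdom2⟩ := h2
  obtain ⟨K₁, K₂, L₁, L₂, h1, h2, h3, h4, h5, _⟩ :=
    mulGe_compose hge_refl hge_trans hgt_trans hcompat hM hN hrel1 hdom1 hN' hP hrel2 hdom2
  refine ⟨K₁, K₂, L₁, L₂, h1, h2, h3, ?_, h4⟩
  intro hK
  exact hne (Multiset.le_zero.mp (hK ▸ h5))

lemma exists_gt_maximal (hgt_irrefl : Irreflexive gt) (hgt_trans : Transitive gt)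
    {s : Multiset α} (hs : s ≠ 0) : ∃ x ∈ s, ∀ y ∈ s, ¬ gt y x := by
  induction s using Multiset.induction with
  | empty => exact absurd rfl hs
  | @cons a s ih =>
    by_cases hs0 : s = 0
    · subst hs0
      refine ⟨a, Multiset.mem_cons_self _ _, ?_⟩
      intro y hy
      rw [Multiset.mem_cons] at hy
      rcases hy with rfl | hy
      · exact hgt_irrefl _
      · simp at hy
    · obtain ⟨m, hm, hmax⟩ := ih hs0
      by_cases h : gt a m
      · refine ⟨a, Multiset.mem_cons_self _ _, ?_⟩
        intro y hy hya
        rw [Multiset.mem_cons] at hy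
        rcases hy with rfl | hy
        · exact hgt_irrefl _ hya
        · exact hmax y hy (hgt_trans hya h)
      · refine ⟨m, Multiset.mem_cons_of_mem hm, ?_⟩
        intro y hy hym
        rw [Multiset.mem_cons] at hy
        rcases hy with rfl | hy
        · exact h hym
        · exact hmax y hy hym

lemma mulGt_irrefl (hge_refl : Reflexive ge) (hgt_irrefl : Irreflexive gt)
    (hgt_trans : Transitive gt)
    (hcompat : ∀ a b c d, ge a b → gt b c → ge c d → gt a d) :
    ∀ (M : Multiset α), ¬ MulGt ge gt M M := by
  suffices h : ∀ (n : ℕ) (M : Multiset α), Multiset.card M ≤ n → ¬ MulGt ge gt M M by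
    intro M
    exact h (Multiset.card M) M le_rfl
  intro n
  induction n with
  | zero =>
    rintro M hM ⟨M₁, M₂, N₁, N₂, h1, _, _, hne, _⟩
    apply hne
    have hM0 : M = 0 := Multiset.card_eq_zero.mp (Nat.le_zero.mp hM)
    rw [hM0] at h1
    exact Multiset.le_zero.mp (le_of_le_of_eq (Multiset.le_add_left _ _) h1.symm)
  | succ n ih =>
    rintro M hM ⟨M₁, M₂, N₁, N₂, hM₁₂, hN₁₂, hrel, hne, hdom⟩
    obtain ⟨x, hx, hmax⟩ := exists_gt_maximal hgt_irrefl hgt_trans hne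
    have hxM : x ∈ N₁ + N₂ := by
      rw [← hN₁₂, hM₁₂]
      exact Multiset.mem_add.mpr (Or.inr hx)
    rcases Multiset.mem_add.mp hxM with hxN₁ | hxN₂
    · -- x occurs in the matched part on the right; cancel it.
      have hN₁eq : N₁ = x ::ₘ N₁.erase x := (Multiset.cons_erase hxN₁).symm
      rw [hN₁eq] at hrel
      rcases Multiset.rel_cons_right.mp hrel with ⟨x', M₁', hx'x, hrel', hM₁'⟩
      set M₂' := M₂.erase x with hM₂'
      have hM₂eq : M₂ = x ::ₘ M₂' := (Multiset.cons_erase hx).symm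
      set K : Multiset α := M₁' + (x' ::ₘ M₂') with hK
      have hxKM : x ::ₘ K = M := by
        rw [hK, hM₁₂, hM₁', hM₂eq]
        simp only [← Multiset.singleton_add]
        abel
      have hxKN : x ::ₘ (N₁.erase x + N₂) = M := by
        rw [hN₁₂]
        conv_rhs => rw [hN₁eq]
        rw [Multiset.cons_add]
      have hKeq : K = N₁.erase x + N₂ :=
        (Multiset.cons_inj_right x).mp (hxKM.trans hxKN.symm)
      have hKcard : Multiset.card K ≤ n := by
        have hc := congrArg Multiset.card hxKM
        rw [Multiset.card_cons] at hc
        omega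
      refine ih K hKcard ⟨M₁', x' ::ₘ M₂', N₁.erase x, N₂, rfl, hKeq, hrel',
        Multiset.cons_ne_zero, ?_⟩
      intro y hy
      obtain ⟨z, hz, hzy⟩ := hdom y hy
      rw [hM₂eq, Multiset.mem_cons] at hz
      rcases hz with rfl | hz
      · exact ⟨x', Multiset.mem_cons_self _ _, hcompat x' z y y hx'x hzy (hge_refl y)⟩
      · exact ⟨z, Multiset.mem_cons_of_mem hz, hzy⟩
    · obtain ⟨z, hz, hzx⟩ := hdom x hxN₂
      exact hmax z hz hzx

end Aux

section ResAux

open scoped Classical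

variable {F V : Type}

lemma aux_sub_helper {A B C : Multiset (Term F V)} (h : ∀ t ∈ C, t ∉ A) :
    A + B - C = A + (B - C) := by
  ext t
  simp only [Multiset.count_add, Multiset.count_sub]
  by_cases hc : t ∈ C
  · have hA : Multiset.count t A = 0 := Multiset.count_eq_zero.mpr (h t hc)
    omega
  · have hC : Multiset.count t C = 0 := Multiset.count_eq_zero.mpr hc
    omega

lemma aux_resV_mem {M : Multiset (Term F V)} {t : Term F V} (h : t ∈ resV M) :
    ∃ x, t = Term.var x := (Multiset.mem_filter.mp h).2

lemma aux_resNL_mem {prec : F → F → Prop} {f : F} {M : Multiset (Term F V)} {t : Term F V}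
    (h : t ∈ resNL prec f M) : ∃ g ts, t = Term.fn g ts ∧ ¬ prec g f :=
  (Multiset.mem_filter.mp h).2

lemma aux_resNL_sub (prec : F → F → Prop) (f : F) (S T : Multiset (Term F V)) :
    resNL prec f T + resV T - resV S = resNL prec f T + (resV T - resV S) := by
  apply aux_sub_helper
  intro t ht hA
  obtain ⟨x, rfl⟩ := aux_resV_mem ht
  obtain ⟨g, ts, heq, -⟩ := aux_resNL_mem hA
  cases heq

end ResAux

theorem f_extension_order_pair {F V : Type} (prec : F → F → Prop)
    (hprec_irrefl : Irreflexive prec) (hprec_trans : Transitive prec) (f : F)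
    (ge gt : Term F V → Term F V → Prop)
    (hge_refl : Reflexive ge) (hge_trans : Transitive ge)
    (hgt_irrefl : Irreflexive gt) (hgt_trans : Transitive gt)
    (hcompat : ∀ a b c d, ge a b → gt b c → ge c d → gt a d) :
    Reflexive (GeF ge gt prec f) ∧ Transitive (GeF ge gt prec f) ∧
    Irreflexive (GtF ge gt prec f) ∧ Transitive (GtF ge gt prec f) ∧
    (∀ S T U V' : Multiset (Term F V), GeF ge gt prec f S T →
      GtF ge gt prec f T U → GeF ge gt prec f U V' → GtF ge gt prec f S V') := by
  classical
  have hsub := aux_resNL_sub (F := F) (V := V) prec f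
  refine ⟨?_, ?_, ?_, ?_, ?_⟩
  · -- reflexivity of GeF
    intro S
    unfold GeF
    rw [add_tsub_cancel_right]
    exact mulGe_refl hge_refl _
  · -- transitivity of GeF
    intro S T U h1 h2
    unfold GeF at h1 h2 ⊢
    rw [hsub] at h1 h2 ⊢
    have h2' := mulGe_add hge_refl h2 (resV T - resV S)
    have h3 := mulGe_trans hge_refl hge_trans hgt_trans hcompat h1 h2'
    have h4 : resNL prec f U + (resV U - resV S) ≤
        resNL prec f U + (resV U - resV T) + (resV T - resV S) := by
      rw [Multiset.le_iff_count]
      intro t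
      simp only [Multiset.count_add, Multiset.count_sub]
      omega
    exact mulGe_trans hge_refl hge_trans hgt_trans hcompat h3 (mulGe_of_le hge_refl h4)
  · -- irreflexivity of GtF
    intro S h
    unfold GtF at h
    rw [add_tsub_cancel_right] at h
    exact mulGt_irrefl hge_refl hgt_irrefl hgt_trans hcompat _ h
  · -- transitivity of GtF
    intro S T U h1 h2
    unfold GtF at h1 h2 ⊢
    rw [hsub] at h1 h2 ⊢
    have h2' := mulGt_add hge_refl h2 (resV T - resV S)
    have h3 := mulGt_of_ge_gt hge_refl hge_trans hgt_trans hcompat (mulGe_of_gt h1) h2'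
    have h4 : resNL prec f U + (resV U - resV S) ≤
        resNL prec f U + (resV U - resV T) + (resV T - resV S) := by
      rw [Multiset.le_iff_count]
      intro t
      simp only [Multiset.count_add, Multiset.count_sub]
      omega
    exact mulGt_of_gt_ge hge_refl hge_trans hgt_trans hcompat h3 (mulGe_of_le hge_refl h4)
  · -- compatibility
    intro S T U W h1 h2 h3
    simp only [GeF, GtF] at h1 h2 h3 ⊢
    rw [hsub] at h1 h2 h3 ⊢
    have h2' := mulGt_add hge_refl h2 (resV T - resV S)
    have hA := mulGt_of_ge_gt hge_refl hge_trans hgt_trans hcompat h1 h2'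
    have h3' := mulGe_add hge_refl h3 ((resV U - resV T) + (resV T - resV S))
    rw [← add_assoc, ← add_assoc] at h3'
    have hB := mulGt_of_gt_ge hge_refl hge_trans hgt_trans hcompat
      (by rwa [add_assoc] at hA) (by rwa [add_assoc (resNL prec f U)] at h3')
    have h4 : resNL prec f W + (resV W - resV S) ≤
        resNL prec f W + (resV W - resV U) + (resV U - resV T) + (resV T - resV S) := by
      rw [Multiset.le_iff_count]
      intro t
      simp only [Multiset.count_add, Multiset.count_sub]
      omega
    exact mulGt_of_gt_ge hge_refl hge_trans hgt_trans hcompat hB (mulGe_of_le hge_refl h4)
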